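/- For every n ≥ 1, the number of bracketed implications on n distinct variables equals the Catalan number C_n = (1/n)·binomial(2n−2, n−1). Consequently, by the uniqueness of truth tables of bracketed implications, C_n is also the number of distinct propositional functions (Fin n → Bool) → Bool defined by bracketed implications on n variables. -/

import Mathlib

/-- Bracketed implications: `BImp n` is the type of well-formed bracketings of
`p₁ → p₂ → ⋯ → pₙ` (1-indexed variables correspond to 0-indexed `Fin n`). -/
inductive BImp : ℕ → Type where
  | leaf : BImp 1
  | node : {i j : ℕ} → BImp i → BImp j → BImp (i + j)

/-- Evaluation of a bracketed implication under a valuation `ν : Fin n → Bool`: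
a leaf evaluates to the value of its variable, and a node `ψ → χ` evaluates to the
Boolean implication, with `ψ` evaluated on the first coordinates and `χ` on the last. -/
def BImp.eval : {n : ℕ} → BImp n → (Fin n → Bool) → Bool
  | _, .leaf, ν => ν 0
  | _, .node ψ χ, ν =>
      !(ψ.eval fun k => ν (Fin.castAdd _ k)) || χ.eval fun k => ν (Fin.natAdd _ k)

/-- The Catalan number `C n = (1/n) * binomial (2n-2) (n-1)` (the division is exact). -/
def catalanC (n : ℕ) : ℕ := (2 * n - 2).choose (n - 1) / n

lemma BImp.pos : ∀ {n : ℕ}, BImp n → 1 ≤ n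
  | _, .leaf => le_refl 1
  | _, .node ψ χ => by have := pos ψ; have := pos χ; omega

lemma BImp.inv {n : ℕ} (φ : BImp n) :
    (∃ (h : n = 1), φ = h ▸ BImp.leaf) ∨
    ∃ (i j : ℕ) (ψ : BImp i) (χ : BImp j) (h : i + j = n), HEq φ (BImp.node ψ χ) := by
  cases φ with
  | leaf => exact Or.inl ⟨rfl, rfl⟩
  | node ψ χ => exact Or.inr ⟨_, _, ψ, χ, rfl, HEq.rfl⟩

/-- last variable true → formula true -/
lemma BImp.eval_last_true : ∀ {n : ℕ} (φ : BImp n) (ν : Fin n → Bool) (hn : n - 1 < n),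
    ν ⟨n - 1, hn⟩ = true → φ.eval ν = true
  | _, .leaf, ν, hn, h => by simpa [BImp.eval] using h
  | _, .node (i := i) (j := j) ψ χ, ν, hn, h => by
    have hj := pos χ
    have hχ : χ.eval (fun k => ν (Fin.natAdd i k)) = true := by
      apply eval_last_true _ _ (by omega)
      have : Fin.natAdd i (⟨j - 1, by omega⟩ : Fin j) = ⟨i + j - 1, hn⟩ := by
        ext; simp; omega
      rw [this]; exact h
    simp [BImp.eval, hχ]

/-- all variables true except the last → formula false -/
lemma BImp.eval_false : ∀ {n : ℕ} (φ : BImp n) (ν : Fin n → Bool),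
    (∀ k : Fin n, ν k = decide ((k : ℕ) ≠ n - 1)) → φ.eval ν = false
  | _, .leaf, ν, h => by simpa [BImp.eval] using h 0
  | _, .node (i := i) (j := j) ψ χ, ν, h => by
    have hi := pos ψ
    have hj := pos χ
    have hψ : ψ.eval (fun k => ν (Fin.castAdd j k)) = true := by
      apply eval_last_true _ _ (show i - 1 < i by omega)
      have := h (Fin.castAdd j ⟨i - 1, by omega⟩)
      simp at this ⊢
      rw [this]
      simp; omega
    have hχ : χ.eval (fun k => ν (Fin.natAdd i k)) = false := by
      apply eval_false
      intro k
      have := h (Fin.natAdd i k)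
      simp at this ⊢
      rw [this]
      have hk := k.isLt
      congr 1
      rw [decide_eq_decide]
      omega
    simp [BImp.eval, hψ, hχ]

/-- variables all true except at positions `c` and `n-1` -/
def nuv (n c : ℕ) : Fin n → Bool := fun k => decide ((k : ℕ) ≠ c ∧ (k : ℕ) ≠ n - 1)

lemma BImp.eval_nu_eq {i j : ℕ} (ψ : BImp i) (χ : BImp j) :
    (BImp.node ψ χ).eval (nuv (i + j) (i - 1)) = true := by
  have hi := pos ψ
  have hj := pos χ
  have hψ : ψ.eval (fun k => nuv (i + j) (i - 1) (Fin.castAdd j k)) = false := by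
    apply eval_false
    intro k
    have hk := k.isLt
    simp [nuv]
    omega
  simp [BImp.eval, hψ]

lemma BImp.eval_nu_lt {i j : ℕ} (ψ : BImp i) (χ : BImp j) (c : ℕ) (hc : c + 1 < i) :
    (BImp.node ψ χ).eval (nuv (i + j) c) = false := by
  have hi := pos ψ
  have hj := pos χ
  have hψ : ψ.eval (fun k => nuv (i + j) c (Fin.castAdd j k)) = true := by
    apply eval_last_true _ _ (show i - 1 < i by omega)
    simp [nuv]
    omega
  have hχ : χ.eval (fun k => nuv (i + j) c (Fin.natAdd i k)) = false := by
    apply eval_false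
    intro k
    have hk := k.isLt
    simp [nuv]
    have h1 : i + (k : ℕ) ≠ c := by omega
    simp [h1]
    congr 1
    omega
  simp [BImp.eval, hψ, hχ]

lemma BImp.eval_heq {n n' : ℕ} (h : n = n') (φ : BImp n) (φ' : BImp n') (hφ : HEq φ φ')
    (ν : Fin n' → Bool) : φ.eval (fun k => ν (Fin.cast h k)) = φ'.eval ν := by
  subst h
  cases hφ
  rfl

lemma BImp.eval_injective : ∀ {n : ℕ} (φ φ' : BImp n),
    (∀ ν, φ.eval ν = φ'.eval ν) → φ = φ' := by
  intro n
  induction n using Nat.strong_induction_on with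
  | _ n IH =>
    intro φ φ' h
    rcases BImp.inv φ with ⟨h1, hφ⟩ | ⟨i, j, ψ, χ, hij, hφ⟩
    · subst h1
      rcases BImp.inv φ' with ⟨_, hφ'⟩ | ⟨i', j', ψ', χ', hij', hφ'⟩
      · rw [hφ, hφ']
      · exfalso
        have := ψ'.pos; have := χ'.pos; omega
    · subst hij
      have hφeq : φ = BImp.node ψ χ := eq_of_heq hφ
      subst hφeq
      rcases BImp.inv φ' with ⟨h1, _⟩ | ⟨i', j', ψ', χ', hij', hφ'⟩
      · exfalso; have := ψ.pos; have := χ.pos; omega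
      · have hi := ψ.pos; have hj := χ.pos
        have hi' := ψ'.pos; have hj' := χ'.pos
        -- eval of φ' in terms of node ψ' χ'
        have keyφ' : ∀ ν : Fin (i + j) → Bool,
            φ'.eval ν = (BImp.node ψ' χ').eval (fun k => ν (Fin.cast hij' k)) := by
          intro ν
          have := BImp.eval_heq hij' (BImp.node ψ' χ') φ' hφ'.symm ν
          rw [← this]
        have hnu : ∀ c, (fun k => nuv (i + j) c (Fin.cast hij' k)) = nuv (i' + j') c := by
          intro c
          funext k
          simp [nuv, hij']
        -- i = i'
        have hii : i = i' := by
          by_contra hne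
          rcases Nat.lt_or_ge i i' with hlt | hge
          · have h1 := h (nuv (i + j) (i - 1))
            rw [BImp.eval_nu_eq, keyφ', hnu] at h1
            rw [BImp.eval_nu_lt ψ' χ' (i - 1) (by omega)] at h1
            exact Bool.true_eq_false.mp h1
          · have hlt : i' < i := by omega
            have h1 := h (nuv (i + j) (i' - 1))
            rw [BImp.eval_nu_lt ψ χ (i' - 1) (by omega), keyφ', hnu] at h1
            rw [BImp.eval_nu_eq] at h1
            exact Bool.false_eq_true.mp h1
        subst hii
        have hjj : j = j' := by omega
        subst hjj
        have hφ'eq : φ' = BImp.node ψ' χ' := eq_of_heq hφ'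
        subst hφ'eq
        -- now extract eval equalities for ψ and χ
        have hψeval : ∀ σ : Fin i → Bool, ψ.eval σ = ψ'.eval σ := by
          intro σ
          set ν : Fin (i + j) → Bool :=
            fun k => if hk : (k : ℕ) < i then σ ⟨k, hk⟩ else decide ((k : ℕ) ≠ i + j - 1)
            with hν
          have hcast : (fun k => ν (Fin.castAdd j k)) = σ := by
            funext k
            simp [hν, k.isLt]
          have hnat : ∀ (χ₀ : BImp j), χ₀.eval (fun k => ν (Fin.natAdd i k)) = false := by
            intro χ₀
            apply BImp.eval_false
            intro k
            have hk := k.isLt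
            simp only [hν, Fin.natAdd, Fin.val_mk]
            rw [dif_neg (by omega)]
            congr 1
            exact propext (by omega)
          have h1 := h ν
          simp only [BImp.eval, hcast, hnat, Bool.or_false] at h1
          simpa using h1
        have hχeval : ∀ τ : Fin j → Bool, χ.eval τ = χ'.eval τ := by
          intro τ
          set ν : Fin (i + j) → Bool :=
            fun k => if hk : (k : ℕ) < i then true else τ ⟨(k : ℕ) - i, by have := k.isLt; omega⟩
            with hν
          have hcast : ∀ (ψ₀ : BImp i), ψ₀.eval (fun k => ν (Fin.castAdd j k)) = true := by
            intro ψ₀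
            apply BImp.eval_last_true _ _ (show i - 1 < i by omega)
            simp [hν]
            omega
          have hnat : (fun k => ν (Fin.natAdd i k)) = τ := by
            funext k
            simp only [hν, Fin.natAdd, Fin.val_mk]
            rw [dif_neg (by omega)]
            congr 1
            apply Fin.ext
            simp
          have h1 := h ν
          simp only [BImp.eval, hcast, hnat, Bool.not_true, Bool.false_or] at h1
          exact h1
        have e1 : ψ = ψ' := IH i (by omega) ψ ψ' hψeval
        have e2 : χ = χ' := IH j (by omega) χ χ' hχeval
        rw [e1, e2]

def BImp.toTree : {n : ℕ} → BImp n → Tree Unit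
  | _, .leaf => .nil
  | _, .node ψ χ => .node () ψ.toTree χ.toTree

lemma BImp.numLeaves_toTree : ∀ {n : ℕ} (φ : BImp n), φ.toTree.numLeaves = n
  | _, .leaf => rfl
  | _, .node ψ χ => by
    simp [BImp.toTree, Tree.numLeaves, numLeaves_toTree ψ, numLeaves_toTree χ]

def BImp.ofTree : (t : Tree Unit) → BImp t.numLeaves
  | .nil => .leaf
  | .node _ l r => .node (ofTree l) (ofTree r)

lemma BImp.node_heq {i i' j j' : ℕ} (hi : i = i') (hj : j = j')
    {ψ : BImp i} {ψ' : BImp i'} {χ : BImp j} {χ' : BImp j'}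
    (h1 : HEq ψ ψ') (h2 : HEq χ χ') : HEq (BImp.node ψ χ) (BImp.node ψ' χ') := by
  subst hi; subst hj; cases h1; cases h2; rfl

lemma BImp.toTree_ofTree : ∀ (t : Tree Unit), (BImp.ofTree t).toTree = t
  | .nil => rfl
  | .node _ l r => by
    simp [BImp.ofTree, BImp.toTree, toTree_ofTree l, toTree_ofTree r]

lemma BImp.ofTree_toTree : ∀ {n : ℕ} (φ : BImp n), HEq (BImp.ofTree φ.toTree) φ
  | _, .leaf => HEq.rfl
  | _, .node ψ χ =>
    BImp.node_heq (numLeaves_toTree ψ) (numLeaves_toTree χ) (ofTree_toTree ψ) (ofTree_toTree χ)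

lemma BImp.toTree_heq {n n' : ℕ} (h : n = n') {φ : BImp n} {φ' : BImp n'}
    (hφ : HEq φ φ') : φ.toTree = φ'.toTree := by
  subst h; cases hφ; rfl

lemma BImp.toTree_injective {n : ℕ} : Function.Injective (BImp.toTree (n := n)) := by
  intro φ φ' h
  have h1 := BImp.ofTree_toTree φ
  have h2 := BImp.ofTree_toTree φ'
  rw [h] at h1
  exact eq_of_heq (h1.symm.trans h2)

lemma BImp.card (n : ℕ) (hn : 1 ≤ n) : Nat.card (BImp n) = catalan (n - 1) := by
  have key : Nat.card (BImp n) = Nat.card {t : Tree Unit // t ∈ Tree.treesOfNumNodesEq (n - 1)} := by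
    apply Nat.card_eq_of_bijective
      (fun φ => ⟨φ.toTree, by
        rw [BinaryTree.mem_treesOfNumNodesEq]
        have h1 := BImp.numLeaves_toTree φ
        have h2 := φ.toTree.numLeaves_eq_numNodes_succ
        simp only [Tree.numLeaves] at h1
        omega⟩)
    constructor
    · intro φ φ' h
      exact BImp.toTree_injective (congrArg Subtype.val h)
    · rintro ⟨t, ht⟩
      rw [BinaryTree.mem_treesOfNumNodesEq] at ht
      have hL : t.numLeaves = n := by
        have := t.numLeaves_eq_numNodes_succ
        simp only [Tree.numLeaves]
        omega
      refine ⟨hL ▸ BImp.ofTree t, ?_⟩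
      apply Subtype.ext
      simp only
      rw [BImp.toTree_heq hL.symm (eqRec_heq hL (BImp.ofTree t))]
      exact BImp.toTree_ofTree t
  rw [key, Nat.card_eq_fintype_card, Fintype.card_coe, BinaryTree.treesOfNumNodesEq_card_eq_catalan]

lemma catalanC_eq (n : ℕ) (hn : 1 ≤ n) : catalanC n = catalan (n - 1) := by
  rw [catalan_eq_centralBinom_div, Nat.centralBinom, catalanC]
  congr 2 <;> omega

/-- The number of bracketed implications on `n ≥ 1` variables is the Catalan number
`C n`, and (by uniqueness of truth tables) so is the number of distinct propositional
functions `(Fin n → Bool) → Bool` defined by bracketed implications. -/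
theorem card_bracketed_implications (n : ℕ) (hn : 1 ≤ n) :
    Nat.card (BImp n) = catalanC n ∧
    Nat.card {F : (Fin n → Bool) → Bool // ∃ φ : BImp n, ∀ ν, φ.eval ν = F ν} =
      catalanC n := by
  have hcard : Nat.card (BImp n) = catalanC n := by
    rw [BImp.card n hn, catalanC_eq n hn]
  refine ⟨hcard, ?_⟩
  have hinj : Function.Injective (BImp.eval (n := n)) := by
    intro φ φ' h
    exact BImp.eval_injective φ φ' (fun ν => congrFun h ν)
  have e : {F : (Fin n → Bool) → Bool // ∃ φ : BImp n, ∀ ν, φ.eval ν = F ν} ≃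
      Set.range (BImp.eval (n := n)) :=
    Equiv.subtypeEquivRight (fun F => by
      simp only [Set.mem_range, funext_iff])
  rw [Nat.card_congr e, Nat.card_range_of_injective hinj, hcard]
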